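/- Let q, m be positive integers with q ≥ 2, and let h be a prime dividing q^m. A map f: ℤ_q^m → ℤ_h is a generalized bent function if and only if R = {(f(x), x) : x ∈ ℤ_q^m} is a splitting (q^m, h, q^m, q^m/h)-relative difference set in ℤ_h × ℤ_q^m relative to the forbidden subgroup ℤ_h × {0}. -/

import Mathlib

open scoped BigOperators

noncomputable section

/-- `zeta k` is the complex `k`-th root of unity `exp(2π√-1/k)`. -/
def zeta (k : ℕ) : ℂ := Complex.exp (2 * Real.pi * Complex.I / k)

/-- Standard dot product of tuples, computed with representatives in `{0,…,q-1}`. -/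
def dotv {m q : ℕ} (u v : Fin m → ZMod q) : ℕ := ∑ i, (u i).val * (v i).val

/-- The "Walsh" sum `Σ_{x ∈ ℤ_q^m} ζ_h^{f(x)} ζ_q^{-w·x}`. -/
def WS (q h : ℕ) {m : ℕ} [NeZero q] (f : (Fin m → ZMod q) → ZMod h)
    (w : Fin m → ZMod q) : ℂ :=
  ∑ x : Fin m → ZMod q, zeta h ^ (f x).val * zeta q ^ (-(dotv w x : ℤ))

/-- `f : ℤ_q^m → ℤ_h` is a generalized bent function (GBF). -/
def IsGBF (q h : ℕ) {m : ℕ} [NeZero q] (f : (Fin m → ZMod q) → ZMod h) : Prop :=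
  ∀ w : Fin m → ZMod q, (‖WS q h f w‖) ^ 2 = (q : ℝ) ^ m

/-- `R` is a `(v,n,k,λ)`-relative difference set in the additive group `E`
relative to the (forbidden) subgroup `N`: a `k`-subset of a transversal for `N`
such that every `x ∈ E ∖ N` has exactly `λ` representations `x = r - r'` with
`r, r' ∈ R` (and no nonzero element of `N` has such a representation). -/
def IsAddRDS {E : Type*} [AddGroup E] (N : AddSubgroup E) (R : Set E)
    (v n k l : ℕ) : Prop :=
  N.index = v ∧ Nat.card N = n ∧ Nat.card R = k ∧
    (∀ r ∈ R, ∀ r' ∈ R, r - r' ∈ N → r = r') ∧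
    ∀ x : E, x ∉ N → Nat.card {p : R × R // (p.1 : E) - (p.2 : E) = x} = l

namespace GBFAux

lemma zeta_zpow (N : ℕ) [NeZero N] (n : ℤ) :
    zeta N ^ n = ZMod.stdAddChar (n : ZMod N) := by
  rw [ZMod.stdAddChar_coe, zeta, ← Complex.exp_int_mul]
  congr 1
  ring

lemma zeta_pow_val (N : ℕ) [NeZero N] (j : ZMod N) :
    zeta N ^ j.val = ZMod.stdAddChar j := by
  have h1 : ((j.val : ℤ) : ZMod N) = j := by
    push_cast
    exact ZMod.natCast_zmod_val j
  calc zeta N ^ j.val = zeta N ^ (j.val : ℤ) := by norm_cast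
  _ = ZMod.stdAddChar ((j.val : ℤ) : ZMod N) := zeta_zpow N _
  _ = ZMod.stdAddChar j := by rw [h1]

lemma conj_stdAddChar (N : ℕ) [NeZero N] (j : ZMod N) :
    (starRingEnd ℂ) (ZMod.stdAddChar j) = ZMod.stdAddChar (-j) := by
  rw [AddChar.map_neg_eq_inv]
  refine (Complex.inv_eq_conj ?_).symm
  rw [ZMod.stdAddChar_apply]
  exact Circle.norm_coe _

lemma stdAddChar_ne_one {N : ℕ} [NeZero N] {c : ZMod N} (hc : c ≠ 0) :
    ZMod.stdAddChar c ≠ 1 := by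
  intro hcon
  apply hc
  apply ZMod.injective_stdAddChar (N := N)
  rw [hcon, AddChar.map_zero_eq_one]

lemma addChar_map_sum {A M ι : Type*} [AddCommMonoid A] [CommMonoid M] (ψ : AddChar A M)
    (s : Finset ι) (g : ι → A) : ψ (∑ i ∈ s, g i) = ∏ i ∈ s, ψ (g i) := by
  classical
  induction s using Finset.cons_induction with
  | empty => simp
  | cons a s ha ih => rw [Finset.sum_cons, Finset.prod_cons, AddChar.map_add_eq_mul, ih]

variable {q m h : ℕ} [NeZero q]

/-- the dot product as an `AddMonoidHom` in the second variable. -/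
def dotHom (w : Fin m → ZMod q) : (Fin m → ZMod q) →+ ZMod q :=
  AddMonoidHom.mk' (fun x => ∑ i, w i * x i)
    (by intro x y; simp [mul_add, Finset.sum_add_distrib])

/-- the character `x ↦ ζ_q^{w·x}` on `ℤ_q^m`. -/
def Psi (w : Fin m → ZMod q) : AddChar (Fin m → ZMod q) ℂ :=
  (ZMod.stdAddChar (N := q)).compAddMonoidHom (dotHom w)

lemma Psi_apply (w x : Fin m → ZMod q) :
    Psi w x = ZMod.stdAddChar (∑ i, w i * x i) := rfl

lemma Psi_symm (w x : Fin m → ZMod q) : Psi w x = Psi x w := by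
  simp only [Psi_apply, mul_comm]

lemma conj_Psi (w x : Fin m → ZMod q) :
    (starRingEnd ℂ) (Psi w x) = Psi w (-x) := by
  rw [Psi_apply, Psi_apply, conj_stdAddChar]
  congr 1
  simp [Finset.sum_neg_distrib, mul_neg]

lemma cardG : Fintype.card (Fin m → ZMod q) = q ^ m := by
  simp [ZMod.card]

lemma sum_Psi (v : Fin m → ZMod q) :
    ∑ w : Fin m → ZMod q, Psi w v = if v = 0 then ((q : ℂ)) ^ m else 0 := by
  classical
  have h1 : ∀ w : Fin m → ZMod q, Psi w v = ∏ i, ZMod.stdAddChar (w i * v i) := by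
    intro w; rw [Psi_apply]; exact addChar_map_sum _ _ _
  simp_rw [h1]
  have h2 := Finset.sum_prod_piFinset (Finset.univ : Finset (ZMod q))
    (fun i c => ZMod.stdAddChar (c * v i))
  rw [← Fintype.piFinset_univ, h2]
  have hfac : ∀ i, (∑ c : ZMod q, ZMod.stdAddChar (c * v i)) =
      if v i = 0 then ((q : ℂ)) else 0 := by
    intro i
    rw [AddChar.sum_mulShift _ (ZMod.isPrimitive_stdAddChar q)]
    simp [ZMod.card]
  simp_rw [hfac]
  by_cases hv : v = 0
  · simp [hv]
  · rw [if_neg hv]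
    obtain ⟨i, hi⟩ : ∃ i, v i ≠ 0 := by
      by_contra hcon; push_neg at hcon; exact hv (funext hcon)
    exact Finset.prod_eq_zero (Finset.mem_univ i) (by rw [if_neg hi])

variable [NeZero h]

/-- autocorrelation sum -/
def Cb (f : (Fin m → ZMod q) → ZMod h) (b : Fin m → ZMod q) : ℂ :=
  ∑ x : Fin m → ZMod q, ZMod.stdAddChar (f (x + b) - f x)

lemma dotv_cast (w x : Fin m → ZMod q) :
    ((dotv w x : ℕ) : ZMod q) = ∑ i, w i * x i := by
  rw [dotv]
  push_cast [ZMod.natCast_zmod_val]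
  rfl

lemma WS_eq (f : (Fin m → ZMod q) → ZMod h) (w : Fin m → ZMod q) :
    WS q h f w = ∑ x : Fin m → ZMod q, ZMod.stdAddChar (f x) * Psi w (-x) := by
  rw [WS]
  refine Finset.sum_congr rfl fun x _ => ?_
  rw [zeta_pow_val, zeta_zpow]
  congr 1
  rw [Psi_apply]
  congr 1
  push_cast [dotv_cast]
  simp [mul_neg, Finset.sum_neg_distrib]

lemma Cb_zero (f : (Fin m → ZMod q) → ZMod h) : Cb f 0 = (q : ℂ) ^ m := by
  rw [Cb]
  simp only [add_zero, sub_self, AddChar.map_zero_eq_one]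
  rw [Finset.sum_const, Finset.card_univ, cardG]
  simp

lemma WS_mul_conj (f : (Fin m → ZMod q) → ZMod h) (w : Fin m → ZMod q) :
    WS q h f w * (starRingEnd ℂ) (WS q h f w) = ∑ b : Fin m → ZMod q, Cb f b * Psi w (-b) := by
  rw [WS_eq, map_sum]
  have hconj : ∀ y : Fin m → ZMod q,
      (starRingEnd ℂ) (ZMod.stdAddChar (f y) * Psi w (-y)) =
        ZMod.stdAddChar (-(f y)) * Psi w y := by
    intro y
    rw [map_mul, conj_stdAddChar, conj_Psi, neg_neg]
  simp_rw [hconj]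
  rw [Finset.sum_mul_sum]
  rw [Finset.sum_comm]
  have hinner : ∀ y : Fin m → ZMod q,
      (∑ x : Fin m → ZMod q, ZMod.stdAddChar (f x) * Psi w (-x) *
        (ZMod.stdAddChar (-(f y)) * Psi w y)) =
      ∑ b : Fin m → ZMod q, ZMod.stdAddChar (f (y + b) - f y) * Psi w (-b) := by
    intro y
    refine (Fintype.sum_equiv (Equiv.addLeft y) _ _ fun b => ?_).symm
    simp only [Equiv.coe_addLeft]
    rw [mul_mul_mul_comm, ← AddChar.map_add_eq_mul, ← AddChar.map_add_eq_mul]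
    congr 2
    · abel
    · abel
  simp_rw [hinner]
  rw [Finset.sum_comm]
  refine Finset.sum_congr rfl fun b _ => ?_
  rw [Cb, Finset.sum_mul]

lemma gbf_iff (f : (Fin m → ZMod q) → ZMod h) :
    IsGBF q h f ↔ ∀ w : Fin m → ZMod q, ∑ b : Fin m → ZMod q, Cb f b * Psi w (-b) = (q : ℂ) ^ m := by
  unfold IsGBF
  refine forall_congr' fun w => ?_
  rw [← WS_mul_conj, Complex.mul_conj, ← Complex.sq_norm]
  constructor
  · intro H; rw [H]; push_cast; ring
  · intro H; exact_mod_cast H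

lemma gbf_iff_Cb (f : (Fin m → ZMod q) → ZMod h) :
    IsGBF q h f ↔ ∀ b : Fin m → ZMod q, b ≠ 0 → Cb f b = 0 := by
  rw [gbf_iff]
  constructor
  · intro H b hb
    have key : ∑ w : Fin m → ZMod q, (∑ b' : Fin m → ZMod q, Cb f b' * Psi w (-b')) * Psi w b
        = Cb f b * (q : ℂ) ^ m := by
      simp_rw [Finset.sum_mul, mul_assoc]
      rw [Finset.sum_comm]
      have hin : ∀ b' : Fin m → ZMod q,
          ∑ w : Fin m → ZMod q, Cb f b' * (Psi w (-b') * Psi w b) =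
            Cb f b' * (if b - b' = 0 then ((q:ℂ))^m else 0) := by
        intro b'
        rw [← Finset.mul_sum]
        congr 1
        have : ∀ w : Fin m → ZMod q, Psi w (-b') * Psi w b = Psi w (b - b') := by
          intro w
          rw [← AddChar.map_add_eq_mul]
          congr 1
          abel
        simp_rw [this]
        exact sum_Psi (b - b')
      simp_rw [hin, mul_ite, mul_zero, sub_eq_zero]
      rw [Finset.sum_ite_eq]
      simp
    have key2 : ∑ w : Fin m → ZMod q,
        (∑ b' : Fin m → ZMod q, Cb f b' * Psi w (-b')) * Psi w b = 0 := by
      simp_rw [H]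
      rw [← Finset.mul_sum, sum_Psi b, if_neg hb, mul_zero]
    rw [key] at key2
    rcases mul_eq_zero.1 key2 with h1 | h1
    · exact h1
    · exact absurd h1 (pow_ne_zero _ (Nat.cast_ne_zero.2 (NeZero.ne q)))
  · intro H w
    rw [Finset.sum_eq_single 0]
    · rw [Cb_zero, neg_zero, AddChar.map_zero_eq_one, mul_one]
    · intro b _ hb; rw [H b hb, zero_mul]
    · intro hcon; exact absurd (Finset.mem_univ 0) hcon

/-- number of solutions of `f(x+b) - f(x) = a`. -/
def Nb (f : (Fin m → ZMod q) → ZMod h) (b : Fin m → ZMod q) (a : ZMod h) : ℕ :=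
  (Finset.univ.filter fun x : Fin m → ZMod q => f (x + b) - f x = a).card

lemma Cb_eq_sum_Nb (f : (Fin m → ZMod q) → ZMod h) (b : Fin m → ZMod q) :
    Cb f b = ∑ a : ZMod h, (Nb f b a : ℂ) * ZMod.stdAddChar a := by
  classical
  rw [Cb, ← Finset.sum_fiberwise' Finset.univ (fun x => f (x + b) - f x)
    (fun a => ZMod.stdAddChar a)]
  refine Finset.sum_congr rfl fun a _ => ?_
  rw [Finset.sum_const, Nb, nsmul_eq_mul]

lemma sum_Nb (f : (Fin m → ZMod q) → ZMod h) (b : Fin m → ZMod q) :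
    ∑ a : ZMod h, Nb f b a = q ^ m := by
  classical
  rw [← cardG (q := q) (m := m), ← Finset.card_univ]
  exact (Finset.card_eq_sum_card_fiberwise fun x _ => Finset.mem_univ (f (x + b) - f x)).symm

lemma sum_stdAddChar_eq_zero (hh : 1 < h) : ∑ a : ZMod h, ZMod.stdAddChar a = 0 := by
  haveI : Fact (1 < h) := ⟨hh⟩
  refine AddChar.sum_eq_zero_of_ne_one ?_
  exact fun hcon => stdAddChar_ne_one (one_ne_zero : (1 : ZMod h) ≠ 0)
    (by rw [hcon, AddChar.one_apply])

lemma const_of_sum_eq_zero {h : ℕ} [NeZero h] (hp : h.Prime) (c : ZMod h → ℕ)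
    (hsum : ∑ a : ZMod h, (c a : ℂ) * ZMod.stdAddChar a = 0) :
    ∀ a, c a = c 0 := by
  haveI : Fact h.Prime := ⟨hp⟩
  set ζ : ℂ := zeta h with hζ
  have Ph : IsPrimitiveRoot ζ h := Complex.isPrimitiveRoot_exp h hp.ne_zero
  -- rewrite the sum over `ZMod h` as a sum over `Finset.range h`
  have hsum' : ∑ j ∈ Finset.range h, ((c ((j : ZMod h)) : ℂ)) * ζ ^ j = 0 := by
    rw [← hsum]
    refine (Finset.sum_nbij' (fun a : ZMod h => a.val) (fun j : ℕ => (j : ZMod h))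
      ?_ ?_ ?_ ?_ ?_).symm
    · intro a _; exact Finset.mem_range.2 (ZMod.val_lt a)
    · intro j _; exact Finset.mem_univ _
    · intro a _; exact ZMod.natCast_zmod_val a
    · intro j hj; exact ZMod.val_natCast_of_lt (Finset.mem_range.1 hj)
    · intro a _
      rw [ZMod.natCast_zmod_val a, zeta_pow_val]
  -- the polynomial with the `c j` as coefficients
  set p : Polynomial ℚ :=
    ∑ j ∈ Finset.range h, Polynomial.C ((c ((j : ZMod h)) : ℚ)) * Polynomial.X ^ j with hpdef
  have hcoeff : ∀ k, p.coeff k =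
      if k ∈ Finset.range h then ((c ((k : ZMod h)) : ℚ)) else 0 := by
    intro k
    rw [hpdef, Polynomial.finset_sum_coeff]
    simp_rw [Polynomial.coeff_C_mul, Polynomial.coeff_X_pow, mul_ite, mul_one, mul_zero]
    exact Finset.sum_ite_eq (Finset.range h) k _
  have haeval : (Polynomial.aeval ζ) p = 0 := by
    have : (Polynomial.aeval ζ) p = ∑ j ∈ Finset.range h, ((c ((j : ZMod h)) : ℂ)) * ζ ^ j := by
      rw [hpdef, map_sum]
      refine Finset.sum_congr rfl fun j _ => ?_
      rw [map_mul, map_pow, Polynomial.aeval_X, Polynomial.aeval_C]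
      norm_cast
    rw [this, hsum']
  have hdvd2 : minpoly ℚ ζ ∣ p := minpoly.dvd ℚ ζ haeval
  rw [← Polynomial.cyclotomic_eq_minpoly_rat Ph hp.pos, Polynomial.cyclotomic_prime ℚ h] at hdvd2
  set Φ : Polynomial ℚ := ∑ i ∈ Finset.range h, Polynomial.X ^ i with hΦdef
  have hΦcoeff : ∀ k, Φ.coeff k = if k ∈ Finset.range h then 1 else 0 := by
    intro k
    rw [hΦdef, Polynomial.finset_sum_coeff]
    simp_rw [Polynomial.coeff_X_pow]
    exact Finset.sum_ite_eq (Finset.range h) k _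
  obtain ⟨u, hu⟩ := hdvd2
  have hΦ0 : Φ ≠ 0 := by
    intro hcon
    have := hΦcoeff 0
    rw [hcon, Polynomial.coeff_zero, if_pos (Finset.mem_range.2 hp.pos)] at this
    exact one_ne_zero this.symm
  have hconst : ∀ k ∈ Finset.range h, ((c ((k : ZMod h)) : ℚ)) = u.coeff 0 := by
    by_cases hp0 : p = 0
    · have hu0 : u = 0 := (mul_eq_zero.1 (by rw [← hu, hp0])).resolve_left hΦ0
      intro k hk
      have h1 := hcoeff k
      rw [hp0, Polynomial.coeff_zero, if_pos hk] at h1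
      rw [← h1, hu0, Polynomial.coeff_zero]
    · have hu0 : u ≠ 0 := fun hcon => hp0 (by rw [hu, hcon, mul_zero])
      have hpdeg : p.natDegree ≤ h - 1 := by
        refine Polynomial.natDegree_le_iff_coeff_eq_zero.2 fun N hN => ?_
        rw [hcoeff, if_neg]
        simp only [Finset.mem_range, not_lt]
        omega
      have hΦdeg : Φ.natDegree = h - 1 := by
        have hΦcyc : Φ = Polynomial.cyclotomic h ℚ := by
          rw [hΦdef, Polynomial.cyclotomic_prime ℚ h]
        rw [hΦcyc, Polynomial.natDegree_cyclotomic, Nat.totient_prime hp]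
      have hmul : p.natDegree = Φ.natDegree + u.natDegree := by
        rw [hu, Polynomial.natDegree_mul hΦ0 hu0]
      rw [hΦdeg] at hmul
      have hudeg : u.natDegree = 0 := by omega
      have hur : u = Polynomial.C (u.coeff 0) := Polynomial.eq_C_of_natDegree_eq_zero hudeg
      intro k hk
      have h1 : p.coeff k = Φ.coeff k * u.coeff 0 := by
        rw [hu, hur, Polynomial.coeff_mul_C, ← hur]
      rw [hcoeff, if_pos hk, hΦcoeff, if_pos hk, one_mul] at h1
      exact h1
  intro a
  have h1 := hconst a.val (Finset.mem_range.2 (ZMod.val_lt a))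
  have h2 := hconst 0 (Finset.mem_range.2 hp.pos)
  rw [ZMod.natCast_zmod_val a] at h1
  rw [Nat.cast_zero] at h2
  exact_mod_cast h1.trans h2.symm

lemma Nb_const_of_Cb_zero (hp : h.Prime) (f : (Fin m → ZMod q) → ZMod h)
    (b : Fin m → ZMod q) (hC : Cb f b = 0) : ∀ a, Nb f b a = q ^ m / h := by
  have hconst := const_of_sum_eq_zero hp (Nb f b) (by rw [← Cb_eq_sum_Nb, hC])
  have hsum := sum_Nb f b
  have h2 : ∑ a : ZMod h, Nb f b a = h * Nb f b 0 := by
    rw [Finset.sum_congr rfl fun a _ => hconst a, Finset.sum_const, Finset.card_univ, ZMod.card,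
      smul_eq_mul]
  intro a
  rw [hconst a, ← hsum, h2, Nat.mul_div_cancel_left _ hp.pos]

lemma Cb_zero_of_Nb_const (hh : 1 < h) (f : (Fin m → ZMod q) → ZMod h)
    (b : Fin m → ZMod q) (hN : ∀ a, Nb f b a = q ^ m / h) : Cb f b = 0 := by
  rw [Cb_eq_sum_Nb]
  have heq : ∀ a : ZMod h, (Nb f b a : ℂ) * ZMod.stdAddChar a =
      ((q ^ m / h : ℕ) : ℂ) * ZMod.stdAddChar a := fun a => by rw [hN a]
  rw [Finset.sum_congr rfl fun a _ => heq a, ← Finset.mul_sum, sum_stdAddChar_eq_zero hh,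
    mul_zero]

lemma gbf_iff_Nb (hp : h.Prime) (f : (Fin m → ZMod q) → ZMod h) :
    IsGBF q h f ↔ ∀ b : Fin m → ZMod q, b ≠ 0 → ∀ a, Nb f b a = q ^ m / h := by
  rw [gbf_iff_Cb]
  exact ⟨fun H b hb => Nb_const_of_Cb_zero hp f b (H b hb),
    fun H b hb => Cb_zero_of_Nb_const hp.one_lt f b (H b hb)⟩

/-- membership characterization of the graph of `f`. -/
lemma mem_graph (f : (Fin m → ZMod q) → ZMod h) (y : ZMod h × (Fin m → ZMod q)) :
    (y ∈ Set.range fun x : Fin m → ZMod q => ((f x, x) : ZMod h × (Fin m → ZMod q))) ↔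
      y.1 = f y.2 := by
  constructor
  · rintro ⟨x, rfl⟩; rfl
  · intro hy; exact ⟨y.2, Prod.ext hy.symm rfl⟩

lemma card_pairs (f : (Fin m → ZMod q) → ZMod h) (a : ZMod h) (b : Fin m → ZMod q) :
    Nat.card {p : (Set.range fun x : Fin m → ZMod q =>
        ((f x, x) : ZMod h × (Fin m → ZMod q))) ×
        (Set.range fun x : Fin m → ZMod q => ((f x, x) : ZMod h × (Fin m → ZMod q))) //
        (p.1 : ZMod h × (Fin m → ZMod q)) - (p.2 : ZMod h × (Fin m → ZMod q)) = (a, b)} =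
      Nb f b a := by
  classical
  have e : {v : Fin m → ZMod q // f (v + b) - f v = a} ≃
      {p : (Set.range fun x : Fin m → ZMod q => ((f x, x) : ZMod h × (Fin m → ZMod q))) ×
        (Set.range fun x : Fin m → ZMod q => ((f x, x) : ZMod h × (Fin m → ZMod q))) //
        (p.1 : ZMod h × (Fin m → ZMod q)) - (p.2 : ZMod h × (Fin m → ZMod q)) = (a, b)} := by
    refine
      { toFun := fun v => ⟨(⟨(f (v.1 + b), v.1 + b), ⟨v.1 + b, rfl⟩⟩,
          ⟨(f v.1, v.1), ⟨v.1, rfl⟩⟩), ?_⟩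
        invFun := fun P => ⟨((P.1.2 : ZMod h × (Fin m → ZMod q))).2, ?_⟩
        left_inv := ?_
        right_inv := ?_ }
    · obtain ⟨v, hv⟩ := v
      simp only [Prod.mk_sub_mk, Prod.mk.injEq]
      exact ⟨hv, by abel⟩
    · obtain ⟨⟨r, r'⟩, hd⟩ := P
      have h1 : (r : ZMod h × (Fin m → ZMod q)).1 = f (r : ZMod h × (Fin m → ZMod q)).2 :=
        (mem_graph f _).1 r.2
      have h2 : (r' : ZMod h × (Fin m → ZMod q)).1 = f (r' : ZMod h × (Fin m → ZMod q)).2 :=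
        (mem_graph f _).1 r'.2
      have hd1 : (r : ZMod h × (Fin m → ZMod q)).1 - (r' : ZMod h × (Fin m → ZMod q)).1 = a :=
        congrArg Prod.fst hd
      have hd2 : (r : ZMod h × (Fin m → ZMod q)).2 - (r' : ZMod h × (Fin m → ZMod q)).2 = b :=
        congrArg Prod.snd hd
      have h3 : (r : ZMod h × (Fin m → ZMod q)).2 =
          (r' : ZMod h × (Fin m → ZMod q)).2 + b := by
        rw [← hd2]; abel
      rw [← h3, ← h1, ← h2]
      exact hd1
    · intro v
      apply Subtype.ext
      rfl
    · intro P
      obtain ⟨⟨r, r'⟩, hd⟩ := P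
      have h1 : (r : ZMod h × (Fin m → ZMod q)).1 = f (r : ZMod h × (Fin m → ZMod q)).2 :=
        (mem_graph f _).1 r.2
      have h2 : (r' : ZMod h × (Fin m → ZMod q)).1 = f (r' : ZMod h × (Fin m → ZMod q)).2 :=
        (mem_graph f _).1 r'.2
      have hd2 : (r : ZMod h × (Fin m → ZMod q)).2 - (r' : ZMod h × (Fin m → ZMod q)).2 = b :=
        congrArg Prod.snd hd
      have h3 : (r' : ZMod h × (Fin m → ZMod q)).2 + b = (r : ZMod h × (Fin m → ZMod q)).2 := by
        rw [← hd2]; abel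
      apply Subtype.ext
      apply Prod.ext
      · apply Subtype.ext
        apply Prod.ext
        · simp only []
          rw [h3, ← h1]
        · simp only []
          rw [h3]
      · apply Subtype.ext
        apply Prod.ext
        · simp only []
          rw [← h2]
        · rfl
  rw [← Nat.card_congr e, Nat.card_eq_fintype_card, Fintype.card_subtype, Nb]

lemma memN_iff (y : ZMod h × (Fin m → ZMod q)) :
    y ∈ (⊤ : AddSubgroup (ZMod h)).prod (⊥ : AddSubgroup (Fin m → ZMod q)) ↔ y.2 = 0 := by
  simp [AddSubgroup.mem_prod]

lemma cardGnat : Nat.card (Fin m → ZMod q) = q ^ m := by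
  rw [Nat.card_fun, Nat.card_zmod, Nat.card_eq_fintype_card, Fintype.card_fin]

lemma cardN :
    Nat.card ((⊤ : AddSubgroup (ZMod h)).prod (⊥ : AddSubgroup (Fin m → ZMod q))) = h := by
  rw [Nat.card_congr (AddSubgroup.prodEquiv _ _).toEquiv, Nat.card_prod,
    AddSubgroup.card_top, AddSubgroup.card_bot, Nat.card_zmod, mul_one]

lemma indexN :
    ((⊤ : AddSubgroup (ZMod h)).prod (⊥ : AddSubgroup (Fin m → ZMod q))).index = q ^ m := by
  rw [AddSubgroup.index_prod, AddSubgroup.index_top, AddSubgroup.index_bot, one_mul, cardGnat]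

lemma card_graph (f : (Fin m → ZMod q) → ZMod h) :
    Nat.card (Set.range fun x : Fin m → ZMod q =>
      ((f x, x) : ZMod h × (Fin m → ZMod q))) = q ^ m := by
  have hinj : Function.Injective (fun x : Fin m → ZMod q =>
      ((f x, x) : ZMod h × (Fin m → ZMod q))) := fun a b hab => congrArg Prod.snd hab
  rw [Nat.card_range_of_injective hinj, cardGnat]

lemma complN :
    IsCompl ((⊤ : AddSubgroup (ZMod h)).prod (⊥ : AddSubgroup (Fin m → ZMod q)))
      ((⊥ : AddSubgroup (ZMod h)).prod (⊤ : AddSubgroup (Fin m → ZMod q))) := by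
  constructor
  · rw [AddSubgroup.disjoint_def]
    intro y hy1 hy2
    have h1 : y.2 = 0 := (memN_iff y).1 hy1
    have h2 : y.1 = 0 := by
      simpa [AddSubgroup.mem_prod] using hy2
    exact Prod.ext h2 h1
  · rw [codisjoint_iff_le_sup]
    intro y _
    have hdecomp : y = ((y.1, 0) : ZMod h × (Fin m → ZMod q)) + (0, y.2) := by
      apply Prod.ext <;> simp
    rw [hdecomp]
    exact AddSubgroup.add_mem _
      (AddSubgroup.mem_sup_left (by simp [AddSubgroup.mem_prod]))
      (AddSubgroup.mem_sup_right (by simp [AddSubgroup.mem_prod]))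

end GBFAux

/-- for `h` a prime dividing `q^m`, a map `f : ℤ_q^m → ℤ_h` is a GBF iff
`R = {(f(x),x) : x ∈ ℤ_q^m}` is a splitting `(q^m, h, q^m, q^m/h)`-relative difference
set in `ℤ_h × ℤ_q^m` relative to the forbidden subgroup `ℤ_h × {0}`. -/
theorem isGBF_iff_splitting_RDS
    (q m h : ℕ) [NeZero q] (hq : 2 ≤ q) (hm : 1 ≤ m)
    (hp : Nat.Prime h) (hdvd : h ∣ q ^ m)
    (f : (Fin m → ZMod q) → ZMod h) :
    IsGBF q h f ↔
      (IsAddRDS ((⊤ : AddSubgroup (ZMod h)).prod (⊥ : AddSubgroup (Fin m → ZMod q)))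
          (Set.range fun x : Fin m → ZMod q => ((f x, x) : ZMod h × (Fin m → ZMod q)))
          (q ^ m) h (q ^ m) (q ^ m / h)
        ∧ ∃ C : AddSubgroup (ZMod h × (Fin m → ZMod q)),
            IsCompl ((⊤ : AddSubgroup (ZMod h)).prod (⊥ : AddSubgroup (Fin m → ZMod q))) C) := by
  haveI : NeZero h := ⟨hp.ne_zero⟩
  rw [GBFAux.gbf_iff_Nb hp f]
  constructor
  · intro H
    refine ⟨⟨GBFAux.indexN, GBFAux.cardN, GBFAux.card_graph f, ?_, ?_⟩, ⟨_, GBFAux.complN⟩⟩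
    · rintro r hr r' hr' hmem
      have h2 : (r - r').2 = 0 := (GBFAux.memN_iff _).1 hmem
      rw [Prod.snd_sub] at h2
      have h3 : r.2 = r'.2 := sub_eq_zero.1 h2
      have e1 := (GBFAux.mem_graph f r).1 hr
      have e2 := (GBFAux.mem_graph f r').1 hr'
      exact Prod.ext (by rw [e1, e2, h3]) h3
    · rintro ⟨a, b⟩ hx
      have hb : b ≠ 0 := fun hcon => hx ((GBFAux.memN_iff _).2 hcon)
      rw [GBFAux.card_pairs f a b]
      exact H b hb a
  · rintro ⟨⟨_, _, _, _, hcount⟩, _⟩ b hb a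
    have hx : ((a, b) : ZMod h × (Fin m → ZMod q)) ∉
        (⊤ : AddSubgroup (ZMod h)).prod (⊥ : AddSubgroup (Fin m → ZMod q)) :=
      fun hcon => hb ((GBFAux.memN_iff _).1 hcon)
    have hc := hcount (a, b) hx
    rw [GBFAux.card_pairs f a b] at hc
    exact hc

end
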